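/- arXiv:1205.1197 — 7 statements merged into one kernel-verified Lean document; each statement's English description precedes it below -/
import Mathlib

section
/- For an admissible pair (a,p), the coding map π_a is a right inverse of the upper itinerary map of the uniform Lorenz system: π_a(μ^+_{a,p}(x)) = x for all x ∈ [0,1]. -/
open scoped Classical

/-- `(a,p)` is admissible if `a ∈ (1,2)`, `p ∈ (0,1)` and `1 - 1/a ≤ p ≤ 1/a`. -/
def Admissible (a p : ℝ) : Prop :=
  1 < a ∧ a < 2 ∧ 0 < p ∧ p < 1 ∧ 1 - 1 / a ≤ p ∧ p ≤ 1 / a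

/-- The uniform upper Lorenz map `U⁺_{a,p}`. -/
noncomputable def Uplus (a p : ℝ) (x : ℝ) : ℝ :=
  if x < p then a * x else a * x + 1 - a

/-- The upper itinerary of `x` under `U⁺_{a,p}`: the `k`-th entry is `1` iff
`(U⁺_{a,p})^k(x) ≥ p`. -/
noncomputable def muPlus (a p : ℝ) (x : ℝ) : ℕ → Bool :=
  fun k => decide (p ≤ (Uplus a p)^[k] x)

/-- The coding map `π_a(ω) = (1 - 1/a) ∑_{k≥0} ω_k a^{-k}`. -/
noncomputable def codingMap (a : ℝ) (ω : ℕ → Bool) : ℝ :=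
  (1 - 1 / a) * ∑' k : ℕ, (if ω k then (1 : ℝ) else 0) / a ^ k

theorem codingMap_muPlus (a p : ℝ) (h : Admissible a p) :
    ∀ x ∈ Set.Icc (0 : ℝ) 1, codingMap a (muPlus a p x) = x := by
  obtain ⟨ha1, ha2, hp0, hp1, hpl, hpu⟩ := h
  have ha0 : (0:ℝ) < a := by linarith
  have hane : a ≠ 0 := ne_of_gt ha0
  intro x hx
  -- invariance of [0,1]
  have hinv : ∀ y ∈ Set.Icc (0:ℝ) 1, Uplus a p y ∈ Set.Icc (0:ℝ) 1 := by
    intro y ⟨hy0, hy1⟩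
    unfold Uplus
    have hap : a * p ≤ 1 := by
      have := mul_le_mul_of_nonneg_left hpu (le_of_lt ha0)
      rwa [mul_one_div, div_self hane] at this
    have haq : a - 1 ≤ a * p := by
      have := mul_le_mul_of_nonneg_left hpl (le_of_lt ha0)
      have h2 : a * (1 - 1/a) = a - 1 := by field_simp
      linarith
    split_ifs with hyp
    · exact ⟨by positivity, by nlinarith⟩
    · push_neg at hyp
      constructor
      · nlinarith
      · nlinarith
  have hiter : ∀ n, (Uplus a p)^[n] x ∈ Set.Icc (0:ℝ) 1 := by
    intro n
    induction n with
    | zero => simpa using hx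
    | succ n ih => rw [Function.iterate_succ_apply']; exact hinv _ ih
  -- key pointwise identity
  have hkey : ∀ y : ℝ, y = (1 - 1/a) * (if p ≤ y then (1:ℝ) else 0) + Uplus a p y / a := by
    intro y
    unfold Uplus
    rcases lt_or_ge y p with hyp | hyp
    · rw [if_pos hyp, if_neg (not_le.mpr hyp)]
      field_simp
      ring
    · rw [if_neg (not_lt.mpr hyp), if_pos hyp]
      field_simp
      ring
  set c : ℕ → ℝ := fun k => (1 - 1/a) * ((if muPlus a p x k then (1:ℝ) else 0) / a ^ k) with hc
  have hstep : ∀ n, c n =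
      (Uplus a p)^[n] x / a ^ n - (Uplus a p)^[n+1] x / (a ^ n * a) := by
    intro n
    have hy := hkey ((Uplus a p)^[n] x)
    rw [hc]
    simp only [muPlus, decide_eq_true_eq]
    rw [Function.iterate_succ_apply']
    by_cases hb : p ≤ (Uplus a p)^[n] x
    · rw [if_pos hb] at hy ⊢
      linear_combination - hy / a ^ n
    · rw [if_neg hb] at hy ⊢
      linear_combination - hy / a ^ n
  have hpartial : ∀ n, ∑ k ∈ Finset.range n, c k = x - (Uplus a p)^[n] x / a ^ n := by
    intro n
    induction n with
    | zero => simp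
    | succ n ih =>
      rw [Finset.sum_range_succ, ih, hstep n, pow_succ]
      ring
  -- the tail tends to 0
  have htail : Filter.Tendsto (fun n => (Uplus a p)^[n] x / a ^ n) Filter.atTop (nhds 0) := by
    have hle : ∀ n, (Uplus a p)^[n] x / a ^ n ≤ (1/a) ^ n := by
      intro n
      have := (hiter n).2
      have hpow : (0:ℝ) < a ^ n := pow_pos ha0 n
      rw [one_div, inv_pow, inv_eq_one_div, div_le_div_iff₀ hpow (by positivity)]
      nlinarith
    have hge : ∀ n, (0:ℝ) ≤ (Uplus a p)^[n] x / a ^ n := by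
      intro n
      have := (hiter n).1
      positivity
    have hlim : Filter.Tendsto (fun n : ℕ => ((1:ℝ)/a) ^ n) Filter.atTop (nhds 0) := by
      apply tendsto_pow_atTop_nhds_zero_of_lt_one
      · positivity
      · rw [div_lt_one ha0]; linarith
    exact squeeze_zero hge hle hlim
  have hsum : HasSum c x := by
    rw [hasSum_iff_tendsto_nat_of_nonneg]
    · have : Filter.Tendsto (fun n => x - (Uplus a p)^[n] x / a ^ n) Filter.atTop (nhds (x - 0)) :=
        Filter.Tendsto.const_sub x htail
      rw [sub_zero] at this
      exact this.congr (fun n => (hpartial n).symm)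
    · intro k
      have : (0:ℝ) ≤ (if muPlus a p x k then (1:ℝ) else 0) := by positivity
      have hpow : (0:ℝ) < a ^ k := pow_pos ha0 k
      rw [hc]
      have h1a : (0:ℝ) ≤ 1 - 1/a := by
        rw [sub_nonneg, div_le_one ha0]; linarith
      positivity
  rw [codingMap, ← tsum_mul_left]
  exact hsum.tsum_eq
end

section
/- For an admissible pair (a,p), the coding map π_a is a right inverse of the lower itinerary map: π_a(μ^-_{a,p}(x)) = x for all x ∈ [0,1]. -/
open scoped Classical

/-- The uniform lower Lorenz map `U⁻_{a,p}`. -/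
noncomputable def Uminus (a p : ℝ) (x : ℝ) : ℝ :=
  if x ≤ p then a * x else a * x + 1 - a

/-- The lower itinerary of `x` under `U⁻_{a,p}`: the `k`-th entry is `1` iff
`(U⁻_{a,p})^k(x) > p`. -/
noncomputable def muMinus (a p : ℝ) (x : ℝ) : ℕ → Bool :=
  fun k => decide (p < (Uminus a p)^[k] x)

lemma Uminus_mem (a p : ℝ) (h : Admissible a p) {x : ℝ} (hx : x ∈ Set.Icc (0:ℝ) 1) :
    Uminus a p x ∈ Set.Icc (0:ℝ) 1 := by
  obtain ⟨ha1, ha2, hp0, hp1, hpl, hpu⟩ := h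
  have ha0 : (0:ℝ) < a := by linarith
  obtain ⟨hx0, hx1⟩ := hx
  unfold Uminus
  split_ifs with hc
  · constructor
    · positivity
    · have : a * x ≤ a * (1/a) := by
        apply mul_le_mul_of_nonneg_left (le_trans hc hpu) (le_of_lt ha0)
      rw [mul_one_div, div_self (ne_of_gt ha0)] at this
      exact this
  · push_neg at hc
    have hc' : 1 - 1/a < x := lt_of_le_of_lt hpl hc
    constructor
    · have : a * (1 - 1/a) < a * x := mul_lt_mul_of_pos_left hc' ha0
      have h2 : a * (1 - 1/a) = a - 1 := by field_simp
      linarith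
    · nlinarith

lemma Uminus_iter_mem (a p : ℝ) (h : Admissible a p) {x : ℝ} (hx : x ∈ Set.Icc (0:ℝ) 1)
    (n : ℕ) : (Uminus a p)^[n] x ∈ Set.Icc (0:ℝ) 1 := by
  induction n with
  | zero => exact hx
  | succ n ih => rw [Function.iterate_succ_apply']; exact Uminus_mem a p h ih

lemma step (a p : ℝ) (ha0 : a ≠ 0) (x : ℝ) :
    x = (1 - 1/a) * (if p < x then (1:ℝ) else 0) + Uminus a p x / a := by
  unfold Uminus
  rcases le_or_gt x p with hc | hc
  · rw [if_pos hc, if_neg (not_lt.mpr hc)]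
    field_simp
    ring
  · rw [if_neg (not_le.mpr hc), if_pos hc]
    field_simp
    ring

lemma alg (a e A B : ℝ) (ha : a ≠ 0) (n : ℕ) (h : A = (1 - 1/a) * e + B / a) :
    (1 - 1/a) * e / a ^ n + B / a ^ (n+1) = A / a ^ n := by
  rw [h]
  field_simp
  ring

lemma partialSum (a p : ℝ) (h : Admissible a p) (x : ℝ) (n : ℕ) :
    ∑ k ∈ Finset.range n, (1 - 1/a) * (if muMinus a p x k then (1:ℝ) else 0) / a ^ k
      + (Uminus a p)^[n] x / a ^ n = x := by
  have ha0 : a ≠ 0 := by have := h.1; linarith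
  induction n with
  | zero => simp
  | succ n ih =>
    rw [Finset.sum_range_succ, Function.iterate_succ_apply']
    have hy := step a p ha0 ((Uminus a p)^[n] x)
    have hmu : (if muMinus a p x n then (1:ℝ) else 0)
        = (if p < (Uminus a p)^[n] x then (1:ℝ) else 0) := by
      unfold muMinus; by_cases hpx : p < (Uminus a p)^[n] x <;> simp [hpx]
    rw [hmu]
    have key := alg a (if p < (Uminus a p)^[n] x then (1:ℝ) else 0)
      ((Uminus a p)^[n] x) (Uminus a p ((Uminus a p)^[n] x)) ha0 n hy
    linarith

theorem codingMap_muMinus (a p : ℝ) (h : Admissible a p) :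
    ∀ x ∈ Set.Icc (0 : ℝ) 1, codingMap a (muMinus a p x) = x := by
  intro x hx
  obtain ⟨ha1, ha2, hp0, hp1, hpl, hpu⟩ := h
  have ha0 : (0:ℝ) < a := by linarith
  have hia : (0:ℝ) ≤ 1/a := by positivity
  have hia1 : 1/a < 1 := by rw [div_lt_one ha0]; linarith
  set f : ℕ → ℝ := fun k => (1 - 1/a) * (if muMinus a p x k then (1:ℝ) else 0) / a ^ k with hf
  have hsum : Summable f := by
    apply Summable.of_nonneg_of_le (fun k => ?_) (fun k => ?_)
      (summable_geometric_of_lt_one hia hia1)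
    · have h1a : (0:ℝ) ≤ 1 - 1/a := by linarith
      have : (0:ℝ) ≤ (if muMinus a p x k then (1:ℝ) else 0) := by positivity
      positivity
    · simp only [hf]
      rw [div_pow, one_pow]
      apply div_le_div_of_nonneg_right ?_ (by positivity)
      have h1 : (if muMinus a p x k then (1:ℝ) else 0) ≤ 1 := by
        split_ifs <;> norm_num
      have h2 : (0:ℝ) ≤ (if muMinus a p x k then (1:ℝ) else 0) := by
        split_ifs <;> norm_num
      nlinarith
  have htend : Filter.Tendsto (fun n => ∑ k ∈ Finset.range n, f k) Filter.atTop (nhds x) := by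
    have heq : ∀ n, ∑ k ∈ Finset.range n, f k = x - (Uminus a p)^[n] x / a ^ n := by
      intro n; have := partialSum a p ⟨ha1, ha2, hp0, hp1, hpl, hpu⟩ x n; linarith
    simp only [heq]
    have h0 : Filter.Tendsto (fun n : ℕ => (Uminus a p)^[n] x / a ^ n) Filter.atTop (nhds 0) := by
      apply squeeze_zero (fun n => ?_) (fun n => ?_)
        (tendsto_pow_atTop_nhds_zero_of_lt_one hia hia1)
      · exact div_nonneg (Uminus_iter_mem a p ⟨ha1, ha2, hp0, hp1, hpl, hpu⟩ hx n).1
          (by positivity)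
      · rw [div_pow, one_pow]
        exact div_le_div_of_nonneg_right
          (Uminus_iter_mem a p ⟨ha1, ha2, hp0, hp1, hpl, hpu⟩ hx n).2 (by positivity)
    have := Filter.Tendsto.const_sub x h0
    simpa using this
  have hHasSum : HasSum f x := (hsum.hasSum_iff_tendsto_nat).mpr htend
  have htsum : ∑' k, f k = x := hHasSum.tsum_eq
  have hcm : codingMap a (muMinus a p x) = ∑' k, f k := by
    unfold codingMap
    rw [hf, ← tsum_mul_left]
    congr 1; funext k; ring
  rw [hcm, htsum]
end

section
/- For an admissible pair (a,p), the upper itinerary map x ↦ μ^+_{a,p}(x) is strictly increasing from [0,1] to {0,1}^ℕ with the lexicographic order: x < y implies μ^+_{a,p}(x) ≺ μ^+_{a,p}(y). -/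
open scoped Classical

/-- The (strict) lexicographic order on `{0,1}^ℕ`: at the first differing index,
`ω` has a `0` and `σ` has a `1`. -/
def LexLt (ω σ : ℕ → Bool) : Prop :=
  ∃ n : ℕ, (∀ m < n, ω m = σ m) ∧ ω n = false ∧ σ n = true

lemma Uplus_mem (a p : ℝ) (h : Admissible a p) {x : ℝ} (hx : x ∈ Set.Icc (0:ℝ) 1) :
    Uplus a p x ∈ Set.Icc (0:ℝ) 1 := by
  obtain ⟨ha1, ha2, hp0, hp1, hpl, hpu⟩ := h
  have ha0 : 0 < a := by linarith
  obtain ⟨hx0, hx1⟩ := hx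
  unfold Uplus
  split_ifs with hxp
  · constructor
    · positivity
    · have : a * x ≤ a * p := by nlinarith
      have : a * p ≤ 1 := by
        have := mul_le_mul_of_nonneg_left hpu (le_of_lt ha0)
        rwa [mul_one_div, div_self (ne_of_gt ha0)] at this
      linarith
  · push_neg at hxp
    constructor
    · have h1 : a * p ≤ a * x := by nlinarith
      have h2 : a * (1 - 1/a) ≤ a * p := by nlinarith
      have : a * (1 - 1/a) = a - 1 := by field_simp
      linarith
    · nlinarith

lemma Uplus_iter_mem (a p : ℝ) (h : Admissible a p) {x : ℝ} (hx : x ∈ Set.Icc (0:ℝ) 1)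
    (n : ℕ) : (Uplus a p)^[n] x ∈ Set.Icc (0:ℝ) 1 := by
  induction n with
  | zero => simpa
  | succ n ih => rw [Function.iterate_succ_apply']; exact Uplus_mem a p h ih

lemma diff_eq (a p : ℝ) (h : Admissible a p) {x y : ℝ} (hxy : x < y) :
    ∀ n : ℕ, (∀ m < n, muPlus a p x m = muPlus a p y m) →
      (Uplus a p)^[n] y - (Uplus a p)^[n] x = a ^ n * (y - x) := by
  intro n
  induction n with
  | zero => intro _; simp
  | succ n ih =>
    intro hag
    have hprev : (Uplus a p)^[n] y - (Uplus a p)^[n] x = a ^ n * (y - x) :=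
      ih (fun m hm => hag m (Nat.lt_succ_of_lt hm))
    have hmun : muPlus a p x n = muPlus a p y n := hag n (Nat.lt_succ_self n)
    simp only [muPlus, decide_eq_decide] at hmun
    rw [Function.iterate_succ_apply', Function.iterate_succ_apply']
    set X := (Uplus a p)^[n] x with hX
    set Y := (Uplus a p)^[n] y with hY
    by_cases hc : X < p
    · have hcy : Y < p := by
        by_contra hcy
        push_neg at hcy
        exact hc.not_ge (hmun.mpr hcy)
      simp only [Uplus, if_pos hc, if_pos hcy]
      rw [pow_succ]
      linear_combination a * hprev
    · have hcy : ¬ Y < p := by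
        push_neg at hc ⊢
        exact hmun.mp hc
      simp only [Uplus, if_neg hc, if_neg hcy]
      rw [pow_succ]
      linear_combination a * hprev

theorem muPlus_strictMono (a p : ℝ) (h : Admissible a p) :
    ∀ x ∈ Set.Icc (0 : ℝ) 1, ∀ y ∈ Set.Icc (0 : ℝ) 1,
      x < y → LexLt (muPlus a p x) (muPlus a p y) := by
  intro x hx y hy hxy
  have ha1 : 1 < a := h.1
  -- there is an index where the itineraries differ
  have hexists : ∃ n, muPlus a p x n ≠ muPlus a p y n := by
    by_contra hall
    push_neg at hall
    obtain ⟨n, hn⟩ := pow_unbounded_of_one_lt (1 / (y - x)) ha1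
    have hd : (Uplus a p)^[n] y - (Uplus a p)^[n] x = a ^ n * (y - x) :=
      diff_eq a p h hxy n (fun m _ => hall m)
    have hyx : 0 < y - x := by linarith
    have h1 : 1 < a ^ n * (y - x) := by
      rw [div_lt_iff₀ hyx] at hn
      linarith
    have hxm := Uplus_iter_mem a p h hx n
    have hym := Uplus_iter_mem a p h hy n
    have : (Uplus a p)^[n] y - (Uplus a p)^[n] x ≤ 1 := by
      have := hxm.1; have := hym.2; linarith
    linarith [hd ▸ this]
  classical
  let n₀ := Nat.find hexists
  have hne : muPlus a p x n₀ ≠ muPlus a p y n₀ := Nat.find_spec hexists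
  have hag : ∀ m < n₀, muPlus a p x m = muPlus a p y m := by
    intro m hm
    by_contra hc
    exact (Nat.find_min hexists hm) hc
  have hd : (Uplus a p)^[n₀] y - (Uplus a p)^[n₀] x = a ^ n₀ * (y - x) :=
    diff_eq a p h hxy n₀ hag
  have hlt : (Uplus a p)^[n₀] x < (Uplus a p)^[n₀] y := by
    have hyx : 0 < y - x := by linarith
    nlinarith [pow_pos (lt_trans zero_lt_one ha1) n₀]
  refine ⟨n₀, hag, ?_, ?_⟩
  · -- μx n₀ = false
    by_contra hc
    have hxt : muPlus a p x n₀ = true := by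
      cases hmx : muPlus a p x n₀ with
      | false => exact absurd hmx hc
      | true => rfl
    have hpx : p ≤ (Uplus a p)^[n₀] x := by
      simpa [muPlus] using hxt
    have hpy : p ≤ (Uplus a p)^[n₀] y := le_of_lt (lt_of_le_of_lt hpx hlt)
    have hyt : muPlus a p y n₀ = true := by simp [muPlus, hpy]
    exact hne (hxt.trans hyt.symm)
  · -- μy n₀ = true
    by_contra hc
    have hyf : muPlus a p y n₀ = false := by
      cases hmy : muPlus a p y n₀ with
      | false => rfl
      | true => exact absurd hmy hc
    have hpy : ¬ p ≤ (Uplus a p)^[n₀] y := by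
      simpa [muPlus] using hyf
    push_neg at hpy
    have hpx : (Uplus a p)^[n₀] x < p := lt_trans hlt hpy
    have hxf : muPlus a p x n₀ = false := by simp [muPlus, not_le.mpr hpx]
    exact hne (hxf.trans hyf.symm)
end

section
/- For an admissible pair (a,p), the restriction of the coding map π_a to the upper address space Ω^+_{a,p} is strictly increasing: if ω, σ ∈ Ω^+_{a,p} and ω ≺ σ lexicographically, then π_a(ω) < π_a(σ). -/
open scoped Classical

lemma Uplus_step (a p : ℝ) (ha : a ≠ 0) (x : ℝ) :
    Uplus a p x = a * x - a * (1 - 1/a) * (if p ≤ x then (1:ℝ) else 0) := by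
  unfold Uplus
  by_cases hp : p ≤ x
  · rw [if_neg (not_lt.mpr hp), if_pos hp]
    field_simp
    ring
  · rw [if_pos (lt_of_not_ge hp), if_neg hp]
    ring

lemma partial_sum (a p : ℝ) (ha : a ≠ 0) (x : ℝ) (n : ℕ) :
    ∑ k ∈ Finset.range n, (1 - 1/a) * ((if muPlus a p x k then (1:ℝ) else 0) / a ^ k)
      = x - (Uplus a p)^[n] x / a ^ n := by
  induction n with
  | zero => simp
  | succ n ih =>
    rw [Finset.sum_range_succ, ih, Function.iterate_succ_apply']
    have hb : (if muPlus a p x n then (1:ℝ) else 0)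
        = if p ≤ (Uplus a p)^[n] x then (1:ℝ) else 0 := by
      unfold muPlus
      by_cases hc : p ≤ (Uplus a p)^[n] x <;> simp [hc]
    rw [hb, Uplus_step a p ha ((Uplus a p)^[n] x)]
    set b := (if p ≤ (Uplus a p)^[n] x then (1:ℝ) else 0) with hbdef
    have hpow : (a:ℝ) ^ n ≠ 0 := pow_ne_zero n ha
    field_simp
    ring

lemma coding_eq (a p : ℝ) (h : Admissible a p) {x : ℝ} (hx : x ∈ Set.Icc (0:ℝ) 1) :
    codingMap a (muPlus a p x) = x := by
  have ha1 := h.1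
  have ha0 : (0:ℝ) < a := lt_trans one_pos ha1
  have hinv : (1:ℝ)/a < 1 := by rw [div_lt_one ha0]; exact ha1
  have hiter : ∀ n, (Uplus a p)^[n] x ∈ Set.Icc (0:ℝ) 1 := by
    intro n
    induction n with
    | zero => simpa using hx
    | succ n ih => rw [Function.iterate_succ_apply']; exact Uplus_mem a p h ih
  have hs : HasSum (fun k => (1 - 1/a) * ((if muPlus a p x k then (1:ℝ) else 0) / a ^ k)) x := by
    rw [hasSum_iff_tendsto_nat_of_nonneg]
    · have heq : (fun n => ∑ k ∈ Finset.range n,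
          (1 - 1/a) * ((if muPlus a p x k then (1:ℝ) else 0) / a ^ k))
          = fun n => x - (Uplus a p)^[n] x / a ^ n := by
        funext n; exact partial_sum a p ha0.ne' x n
      rw [heq]
      have h0 : Filter.Tendsto (fun n => (Uplus a p)^[n] x / a ^ n) Filter.atTop (nhds 0) := by
        apply squeeze_zero (fun n => div_nonneg (hiter n).1 (pow_nonneg ha0.le n))
          (g := fun n => (1/a) ^ n)
        · intro n
          rw [div_pow, one_pow]
          gcongr
          exact (hiter n).2
        · exact tendsto_pow_atTop_nhds_zero_of_lt_one (by positivity) hinv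
      simpa using Filter.Tendsto.sub tendsto_const_nhds h0
    · intro k
      apply mul_nonneg (by linarith)
      apply div_nonneg _ (pow_nonneg ha0.le k)
      by_cases hc : muPlus a p x k <;> simp [hc]
  rw [codingMap, ← tsum_mul_left, hs.tsum_eq]

lemma iter_mono (a p : ℝ) (h : Admissible a p) {x y : ℝ} (hxy : x ≤ y)
    (n : ℕ) (hagree : ∀ m < n, muPlus a p x m = muPlus a p y m) :
    (Uplus a p)^[n] x ≤ (Uplus a p)^[n] y := by
  induction n with
  | zero => simpa using hxy
  | succ n ih =>
    have hle := ih (fun m hm => hagree m (Nat.lt_succ_of_lt hm))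
    have heq := hagree n (Nat.lt_succ_self n)
    unfold muPlus at heq
    rw [decide_eq_decide] at heq
    have ha0 : (0:ℝ) < a := lt_trans one_pos h.1
    rw [Function.iterate_succ_apply', Function.iterate_succ_apply']
    set u := (Uplus a p)^[n] x
    set v := (Uplus a p)^[n] y
    unfold Uplus
    by_cases hp : p ≤ u
    · rw [if_neg (not_lt.mpr hp), if_neg (not_lt.mpr (heq.mp hp))]
      have := mul_le_mul_of_nonneg_left hle ha0.le
      linarith
    · rw [if_pos (lt_of_not_ge hp), if_pos (lt_of_not_ge (fun hq => hp (heq.mpr hq)))]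
      exact mul_le_mul_of_nonneg_left hle ha0.le

theorem codingMap_strictMono_on_upper_address_space (a p : ℝ) (h : Admissible a p) :
    ∀ ω ∈ muPlus a p '' Set.Icc (0 : ℝ) 1, ∀ σ ∈ muPlus a p '' Set.Icc (0 : ℝ) 1,
      LexLt ω σ → codingMap a ω < codingMap a σ := by
  rintro ω ⟨x, hx, rfl⟩ σ ⟨y, hy, rfl⟩ ⟨n, hagree, hω, hσ⟩
  rw [coding_eq a p h hx, coding_eq a p h hy]
  by_contra hle
  push_neg at hle
  have hmono := iter_mono a p h hle n (fun m hm => (hagree m hm).symm)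
  unfold muPlus at hω hσ
  rw [decide_eq_false_iff_not] at hω
  rw [decide_eq_true_iff] at hσ
  exact hω (le_trans hσ hmono)
end

section
/- For an admissible pair (a,p), the restriction of the coding map π_a to Ω^+_{a,p} ∪ Ω^-_{a,p} is monotone increasing: if ω, σ ∈ Ω^+_{a,p} ∪ Ω^-_{a,p} with ω ⪯ σ lexicographically, then π_a(ω) ≤ π_a(σ). -/
open scoped Classical

section Key

variable {a p : ℝ}

/-- Monotonicity key lemma: lex order on itineraries forces point order. -/
lemma key_mono (U V : ℝ → ℝ) (b c : ℝ → Bool) (ha : 0 < a)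
    (hb0 : ∀ z, b z = false → U z = a * z ∧ z ≤ p)
    (hb1 : ∀ z, b z = true → U z = a * z + 1 - a ∧ p ≤ z)
    (hc0 : ∀ z, c z = false → V z = a * z ∧ z ≤ p)
    (hc1 : ∀ z, c z = true → V z = a * z + 1 - a ∧ p ≤ z)
    (x y : ℝ) (hlex : LexLt (fun k => b (U^[k] x)) (fun k => c (V^[k] y))) :
    x ≤ y := by
  obtain ⟨n, hpre, hω, hσ⟩ := hlex
  by_contra hxy
  push_neg at hxy
  have horb : ∀ k ≤ n, V^[k] y < U^[k] x := by
    intro k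
    induction k with
    | zero => intro _; simpa using hxy
    | succ k ih =>
      intro hk
      have hk' : k < n := Nat.lt_of_succ_le hk
      have hlt : V^[k] y < U^[k] x := ih (le_of_lt hk')
      have heq : b (U^[k] x) = c (V^[k] y) := hpre k hk'
      rw [Function.iterate_succ_apply', Function.iterate_succ_apply']
      cases hbc : c (V^[k] y) with
      | false =>
        obtain ⟨e1, _⟩ := hb0 _ (heq.trans hbc)
        obtain ⟨e2, _⟩ := hc0 _ hbc
        rw [e1, e2]; nlinarith
      | true =>
        obtain ⟨e1, _⟩ := hb1 _ (heq.trans hbc)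
        obtain ⟨e2, _⟩ := hc1 _ hbc
        rw [e1, e2]; nlinarith
  have h1 : U^[n] x ≤ p := (hb0 _ hω).2
  have h2 : p ≤ V^[n] y := (hc1 _ hσ).2
  have := horb n le_rfl
  linarith

/-- Coding key lemma: the coding map inverts the itinerary map. -/
lemma key_coding (h : Admissible a p) (U : ℝ → ℝ) (b : ℝ → Bool)
    (hb0 : ∀ z, b z = false → U z = a * z ∧ z ≤ p)
    (hb1 : ∀ z, b z = true → U z = a * z + 1 - a ∧ p ≤ z)
    (x : ℝ) (hx : x ∈ Set.Icc (0:ℝ) 1) :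
    codingMap a (fun k => b (U^[k] x)) = x := by
  obtain ⟨ha1, ha2, hp0, hp1, hpl, hpu⟩ := h
  have ha0 : (0:ℝ) < a := by linarith
  have hap1 : a * p ≤ 1 := by
    have := (le_div_iff₀ ha0).mp hpu; linarith
  have hap0 : a - 1 ≤ a * p := by
    have := mul_le_mul_of_nonneg_left hpl ha0.le
    have h2 : a * (1 - 1/a) = a - 1 := by field_simp
    linarith
  -- invariance of [0,1]
  have hinv : ∀ z ∈ Set.Icc (0:ℝ) 1, U z ∈ Set.Icc (0:ℝ) 1 := by
    intro z hz
    obtain ⟨hz0, hz1⟩ := hz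
    cases hbz : b z with
    | false =>
      obtain ⟨e, hzp⟩ := hb0 _ hbz
      rw [e]
      exact ⟨by positivity, by nlinarith⟩
    | true =>
      obtain ⟨e, hzp⟩ := hb1 _ hbz
      rw [e]
      exact ⟨by nlinarith, by nlinarith⟩
  have horb : ∀ n, U^[n] x ∈ Set.Icc (0:ℝ) 1 := by
    intro n
    induction n with
    | zero => simpa using hx
    | succ n ih => rw [Function.iterate_succ_apply']; exact hinv _ ih
  set f : ℕ → ℝ := fun k => (if b (U^[k] x) then (1:ℝ) else 0) / a ^ k with hf
  -- partial sum identity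
  have hpart : ∀ n, (1 - 1/a) * (∑ k ∈ Finset.range n, f k) + U^[n] x / a ^ n = x := by
    intro n
    induction n with
    | zero => simp
    | succ n ih =>
      rw [Finset.sum_range_succ, Function.iterate_succ_apply']
      have hane : a ≠ 0 := ne_of_gt ha0
      have hpow : (a:ℝ) ^ n ≠ 0 := pow_ne_zero _ hane
      have hstep : (1 - 1/a) * f n + U (U^[n] x) / a ^ (n+1) = U^[n] x / a ^ n := by
        cases hbz : b (U^[n] x) with
        | false =>
          obtain ⟨e, _⟩ := hb0 _ hbz
          have hfn : f n = 0 := by simp [hf, hbz]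
          rw [hfn, e]
          field_simp
          ring
        | true =>
          obtain ⟨e, _⟩ := hb1 _ hbz
          have hfn : f n = 1 / a ^ n := by simp [hf, hbz]
          rw [hfn, e]
          field_simp
          ring
      linear_combination ih + hstep
  -- summability
  have hia : (0:ℝ) < 1/a := by positivity
  have hia1 : (1:ℝ)/a < 1 := by rw [div_lt_one ha0]; linarith
  have hbound : ∀ k, f k ≤ (1/a)^k := by
    intro k
    simp only [hf]
    rw [div_pow, one_pow]
    gcongr
    split <;> norm_num
  have hfnn : ∀ k, 0 ≤ f k := by
    intro k
    apply div_nonneg _ (pow_nonneg ha0.le _)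
    split <;> norm_num
  have hsum : Summable f :=
    Summable.of_nonneg_of_le hfnn hbound (summable_geometric_of_lt_one hia.le hia1)
  have hS : Filter.Tendsto (fun n => ∑ k ∈ Finset.range n, f k)
      Filter.atTop (nhds (∑' k, f k)) := hsum.hasSum.tendsto_sum_nat
  have htail : Filter.Tendsto (fun n => U^[n] x / a ^ n) Filter.atTop (nhds 0) := by
    apply squeeze_zero (fun n => div_nonneg (horb n).1 (pow_nonneg ha0.le n))
      (fun n => ?_) (tendsto_pow_atTop_nhds_zero_of_lt_one hia.le hia1)
    rw [div_pow, one_pow]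
    gcongr
    exact (horb n).2
  have hlim : Filter.Tendsto (fun n => (1 - 1/a) * (∑ k ∈ Finset.range n, f k) + U^[n] x / a ^ n)
      Filter.atTop (nhds ((1 - 1/a) * (∑' k, f k) + 0)) := (hS.const_mul _).add htail
  have heqfun : (fun n => (1 - 1/a) * (∑ k ∈ Finset.range n, f k) + U^[n] x / a ^ n)
      = fun _ : ℕ => x := funext hpart
  rw [heqfun] at hlim
  have hfin : (1 - 1/a) * (∑' k, f k) + 0 = x :=
    tendsto_nhds_unique hlim tendsto_const_nhds
  simpa [codingMap, hf] using hfin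

end Key

section Glue

variable {a p : ℝ}

lemma bPlus0 (z : ℝ) (hz : decide (p ≤ z) = false) : Uplus a p z = a * z ∧ z ≤ p := by
  have : ¬ p ≤ z := of_decide_eq_false hz
  exact ⟨if_pos (by linarith [lt_of_not_ge this]), le_of_lt (lt_of_not_ge this)⟩

lemma bPlus1 (z : ℝ) (hz : decide (p ≤ z) = true) : Uplus a p z = a * z + 1 - a ∧ p ≤ z := by
  have hpz : p ≤ z := of_decide_eq_true hz
  exact ⟨if_neg (not_lt.mpr hpz), hpz⟩

lemma bMinus0 (z : ℝ) (hz : decide (p < z) = false) : Uminus a p z = a * z ∧ z ≤ p := by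
  have : ¬ p < z := of_decide_eq_false hz
  exact ⟨if_pos (not_lt.mp this), not_lt.mp this⟩

lemma bMinus1 (z : ℝ) (hz : decide (p < z) = true) : Uminus a p z = a * z + 1 - a ∧ p ≤ z := by
  have hpz : p < z := of_decide_eq_true hz
  exact ⟨if_neg (not_le.mpr hpz), le_of_lt hpz⟩

end Glue

theorem codingMap_mono_on_union_of_address_spaces (a p : ℝ) (h : Admissible a p) :
    ∀ ω ∈ muPlus a p '' Set.Icc (0 : ℝ) 1 ∪ muMinus a p '' Set.Icc (0 : ℝ) 1,
    ∀ σ ∈ muPlus a p '' Set.Icc (0 : ℝ) 1 ∪ muMinus a p '' Set.Icc (0 : ℝ) 1,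
      (LexLt ω σ ∨ ω = σ) → codingMap a ω ≤ codingMap a σ := by
  have ha0 : (0:ℝ) < a := by linarith [h.1]
  intro ω hω σ hσ hle
  rcases hle with hlex | heq
  · -- extract points and coding identities
    have hmem : ∀ τ ∈ muPlus a p '' Set.Icc (0 : ℝ) 1 ∪ muMinus a p '' Set.Icc (0 : ℝ) 1,
        ∃ (U : ℝ → ℝ) (b : ℝ → Bool) (z : ℝ),
          (∀ w, b w = false → U w = a * w ∧ w ≤ p) ∧
          (∀ w, b w = true → U w = a * w + 1 - a ∧ p ≤ w) ∧
          τ = (fun k => b (U^[k] z)) ∧ codingMap a τ = z := by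
      intro τ hτ
      rcases hτ with ⟨z, hz, rfl⟩ | ⟨z, hz, rfl⟩
      · refine ⟨Uplus a p, fun w => decide (p ≤ w), z, fun w => bPlus0 w,
          fun w => bPlus1 w, rfl, ?_⟩
        exact key_coding h _ _ (fun w => bPlus0 w) (fun w => bPlus1 w) z hz
      · refine ⟨Uminus a p, fun w => decide (p < w), z, fun w => bMinus0 w,
          fun w => bMinus1 w, rfl, ?_⟩
        exact key_coding h _ _ (fun w => bMinus0 w) (fun w => bMinus1 w) z hz
    obtain ⟨U, b, x, hb0, hb1, hωeq, hωc⟩ := hmem ω hω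
    obtain ⟨V, c, y, hc0, hc1, hσeq, hσc⟩ := hmem σ hσ
    rw [hωc, hσc]
    apply key_mono U V b c ha0 hb0 hb1 hc0 hc1
    rw [← hωeq, ← hσeq]
    exact hlex
  · rw [heq]
end

section
/- For an admissible pair (a,p), every x ∈ (0,1) satisfies μ^-_{a,p}(x) ⪯ μ^+_{a,p}(x) in the lexicographic order, with equality if and only if (U^+_{a,p})^k(x) ≠ p for all k ≥ 0. -/
open scoped Classical

theorem muMinus_le_muPlus (a p : ℝ) (h : Admissible a p) :
    ∀ x ∈ Set.Ioo (0 : ℝ) 1,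
      (LexLt (muMinus a p x) (muPlus a p x) ∨ muMinus a p x = muPlus a p x) ∧
      (muMinus a p x = muPlus a p x ↔ ∀ k : ℕ, (Uplus a p)^[k] x ≠ p) := by
  intro x _
  have hUeq : ∀ y : ℝ, y ≠ p → Uminus a p y = Uplus a p y := by
    intro y hy
    rcases lt_or_gt_of_ne hy with h1 | h1
    · simp [Uminus, Uplus, h1, le_of_lt h1]
    · simp [Uminus, Uplus, not_lt.mpr (le_of_lt h1), not_le.mpr h1]
  by_cases hall : ∀ k : ℕ, (Uplus a p)^[k] x ≠ p
  · have horb : ∀ k : ℕ, (Uminus a p)^[k] x = (Uplus a p)^[k] x := by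
      intro k
      induction k with
      | zero => rfl
      | succ n ih =>
        rw [Function.iterate_succ_apply', Function.iterate_succ_apply', ih,
          hUeq _ (hall n)]
    have heq : muMinus a p x = muPlus a p x := by
      funext k
      simp only [muMinus, muPlus, horb k]
      exact decide_eq_decide.mpr
        ⟨fun h1 => le_of_lt h1, fun h1 => lt_of_le_of_ne h1 (Ne.symm (hall k))⟩
    exact ⟨Or.inr heq, ⟨fun _ => hall, fun _ => heq⟩⟩
  · push_neg at hall
    have hex := hall
    set n := Nat.find hex with hn
    have hhit : (Uplus a p)^[n] x = p := Nat.find_spec hex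
    have hmin : ∀ m < n, (Uplus a p)^[m] x ≠ p := fun m hm => Nat.find_min hex hm
    have horb : ∀ m ≤ n, (Uminus a p)^[m] x = (Uplus a p)^[m] x := by
      intro m hm
      induction m with
      | zero => rfl
      | succ j ih =>
        rw [Function.iterate_succ_apply', Function.iterate_succ_apply',
          ih (Nat.le_of_succ_le hm), hUeq _ (hmin j (Nat.lt_of_succ_le hm))]
    have hlex : LexLt (muMinus a p x) (muPlus a p x) := by
      refine ⟨n, fun m hm => ?_, ?_, ?_⟩
      · simp only [muMinus, muPlus, horb m (le_of_lt hm)]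
        exact decide_eq_decide.mpr
          ⟨fun h1 => le_of_lt h1, fun h1 => lt_of_le_of_ne h1 (Ne.symm (hmin m hm))⟩
      · simp [muMinus, horb n le_rfl, hhit]
      · simp [muPlus, hhit]
    refine ⟨Or.inl hlex, ⟨fun heq => ?_, fun hc => absurd hhit (hc n)⟩⟩
    obtain ⟨m, _, hf, ht⟩ := hlex
    rw [heq, ht] at hf
    exact absurd hf (by simp)
end

section
/- Fix a ∈ (1,2). The map p ↦ μ^+_{a,p}(p), from the set of p with (a,p) admissible to {0,1}^ℕ with lexicographic order, is (weakly) increasing: if 1 - 1/a ≤ p < p' ≤ 1/a, then μ^+_{a,p}(p) ⪯ μ^+_{a,p'}(p'). -/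
open scoped Classical

lemma muPlus_iter_diff (a p p' : ℝ) (k : ℕ)
    (h : ∀ m < k, muPlus a p p m = muPlus a p' p' m) :
    (Uplus a p')^[k] p' - (Uplus a p)^[k] p = a ^ k * (p' - p) := by
  induction k with
  | zero => simp
  | succ n ih =>
    have hd := ih (fun m hm => h m (by omega))
    have hb := h n (by omega)
    simp only [muPlus, decide_eq_decide] at hb
    set x := (Uplus a p)^[n] p with hxdef
    set y := (Uplus a p')^[n] p' with hydef
    rw [Function.iterate_succ_apply', Function.iterate_succ_apply', ← hxdef, ← hydef]
    unfold Uplus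
    by_cases hx : p ≤ x
    · rw [if_neg (not_lt.2 hx), if_neg (not_lt.2 (hb.mp hx))]
      linear_combination a * hd
    · rw [if_pos (not_le.1 hx), if_pos (not_le.1 (fun hy => hx (hb.mpr hy)))]
      linear_combination a * hd

theorem muPlus_kneading_mono_in_p (a : ℝ) (ha : a ∈ Set.Ioo (1 : ℝ) 2)
    (p p' : ℝ) (hp : 1 - 1 / a ≤ p) (hpp' : p < p') (hp' : p' ≤ 1 / a) :
    LexLt (muPlus a p p) (muPlus a p' p') ∨ muPlus a p p = muPlus a p' p' := by
  by_cases heq : muPlus a p p = muPlus a p' p'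
  · exact Or.inr heq
  left
  have hex : ∃ n, muPlus a p p n ≠ muPlus a p' p' n := by
    by_contra hc
    push_neg at hc
    exact heq (funext hc)
  set n := Nat.find hex with hn
  have hne : muPlus a p p n ≠ muPlus a p' p' n := Nat.find_spec hex
  have hmin : ∀ m < n, muPlus a p p m = muPlus a p' p' m := by
    intro m hm
    by_contra hc
    exact absurd hm (not_lt.2 (Nat.find_le hc))
  have hd := muPlus_iter_diff a p p' n hmin
  cases hω : muPlus a p p n with
  | false =>
    refine ⟨n, hmin, hω, ?_⟩
    cases hσ : muPlus a p' p' n with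
    | false => exact absurd (hω.trans hσ.symm) hne
    | true => rfl
  | true =>
    exfalso
    have hσ : muPlus a p' p' n = false := by
      cases hσ : muPlus a p' p' n with
      | false => rfl
      | true => exact absurd (hω.trans hσ.symm) hne
    have hn0 : n ≠ 0 := by
      intro h0
      rw [h0] at hσ
      simp [muPlus] at hσ
    have hx : p ≤ (Uplus a p)^[n] p := by
      simpa [muPlus] using hω
    have hy : (Uplus a p')^[n] p' < p' := by
      have := hσ
      simp only [muPlus, decide_eq_false_iff_not, not_le] at this
      exact this
    have hle : (1:ℝ) < a ^ n := lt_of_lt_of_le ha.1 (le_self_pow₀ ha.1.le hn0)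
    have := mul_lt_mul_of_pos_right hle (by linarith : (0:ℝ) < p' - p)
    nlinarith [this, hd]
end
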